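/- arXiv:2208.03208 — 3 statements merged into one kernel-verified Lean document; each statement's English description precedes it below -/
import Mathlib

section
/- Let z, q ∈ ℂ² with a := z·q̄ ≠ 0, and let s ∈ ℂ satisfy s² = a² + 1 and s ≠ −1 (for instance the principal complex square root of a² + 1). Then Φ_EH(z) + Φ_EH(q) − 2 Re( s + Log a − Log(1 + s) ) = √(‖z‖⁴+1) + √(‖q‖⁴+1) − 2 Re s + log( ‖z‖² ‖q‖² |1+s|² / ( |a|² (1 + √(‖z‖⁴+1)) (1 + √(‖q‖⁴+1)) ) ), where Log denotes the principal complex logarithm. (This computes Calabi's diastasis function of the Eguchi–Hanson metric g_EH centered at q.) -/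
open scoped BigOperators

/-- The standard Hermitian pairing `z·w̄ = ∑ k, z k * conj (w k)` on `ℂⁿ`. -/
noncomputable def herm {n : ℕ} (z w : EuclideanSpace ℂ (Fin n)) : ℂ :=
  ∑ k, z k * (starRingEnd ℂ) (w k)

/-- The Eguchi–Hanson Kähler potential
`Φ_EH(z) = √(‖z‖⁴+1) + log ‖z‖² − log(1 + √(‖z‖⁴+1))` on `ℂ²∖{0}`. -/
noncomputable def phiEH (z : EuclideanSpace ℂ (Fin 2)) : ℝ :=
  Real.sqrt (‖z‖ ^ 4 + 1) + Real.log (‖z‖ ^ 2)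
    - Real.log (1 + Real.sqrt (‖z‖ ^ 4 + 1))

/-- Calabi's diastasis function of the Eguchi–Hanson metric centered at `q`. -/
theorem eguchiHanson_diastasis (z q : EuclideanSpace ℂ (Fin 2)) (a s : ℂ)
    (ha : a = herm z q) (ha0 : a ≠ 0) (hs : s ^ 2 = a ^ 2 + 1) (hs1 : s ≠ -1) :
    phiEH z + phiEH q - 2 * (s + Complex.log a - Complex.log (1 + s)).re
      = Real.sqrt (‖z‖ ^ 4 + 1) + Real.sqrt (‖q‖ ^ 4 + 1) - 2 * s.re
        + Real.log (‖z‖ ^ 2 * ‖q‖ ^ 2 * ‖1 + s‖ ^ 2 /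
            (‖a‖ ^ 2 * (1 + Real.sqrt (‖z‖ ^ 4 + 1))
              * (1 + Real.sqrt (‖q‖ ^ 4 + 1)))) := by
  have hz : z ≠ 0 := by rintro rfl; exact ha0 (by simp [ha, herm])
  have hq : q ≠ 0 := by rintro rfl; exact ha0 (by simp [ha, herm])
  have hs0 : (1 : ℂ) + s ≠ 0 := fun h => hs1 (by linear_combination h)
  have hzn : (0 : ℝ) < ‖z‖ ^ 2 := pow_pos (norm_pos_iff.mpr hz) 2
  have hqn : (0 : ℝ) < ‖q‖ ^ 2 := pow_pos (norm_pos_iff.mpr hq) 2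
  have hA : (0 : ℝ) < 1 + Real.sqrt (‖z‖ ^ 4 + 1) := by positivity
  have hB : (0 : ℝ) < 1 + Real.sqrt (‖q‖ ^ 4 + 1) := by positivity
  have haabs : (0 : ℝ) < ‖a‖ := by
    simpa [norm_pos_iff] using ha0
  have hsabs : (0 : ℝ) < ‖1 + s‖ := by
    simpa [norm_pos_iff] using hs0
  have key : Real.log (‖z‖ ^ 2 * ‖q‖ ^ 2 * ‖1 + s‖ ^ 2 /
            (‖a‖ ^ 2 * (1 + Real.sqrt (‖z‖ ^ 4 + 1))
              * (1 + Real.sqrt (‖q‖ ^ 4 + 1))))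
      = Real.log (‖z‖ ^ 2) + Real.log (‖q‖ ^ 2)
        + 2 * Real.log (‖1 + s‖)
        - (2 * Real.log (‖a‖) + Real.log (1 + Real.sqrt (‖z‖ ^ 4 + 1))
          + Real.log (1 + Real.sqrt (‖q‖ ^ 4 + 1))) := by
    rw [Real.log_div (by positivity) (by positivity),
      Real.log_mul (by positivity) (by positivity),
      Real.log_mul (by positivity) (by positivity),
      Real.log_mul (by positivity) (by positivity),
      Real.log_mul (by positivity) (by positivity),
      Real.log_pow, Real.log_pow, Real.log_pow, Real.log_pow]
    push_cast
    ring
  rw [key]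
  simp only [phiEH, Complex.add_re, Complex.sub_re, Complex.log_re]
  ring
end

section
/- Let (w₁, w₂) ∈ ℂ² with w₁ ≠ 0 and set z = (w₁, w₁ w₂) ∈ ℂ². Then √(‖z‖⁴+1) + log ‖z‖² − log(1 + √(‖z‖⁴+1)) = √(|w₁|⁴ (1+|w₂|²)² + 1) + log( (1 + |w₂|²) / (1 + √(|w₁|⁴ (1+|w₂|²)² + 1)) ) + log |w₁|². (Hence, in the first coordinate chart of the blow-up of ℂ² at the origin, the function φ^{EH}_1(w) = √(|w₁|⁴(1+|w₂|²)²+1) + log((1+|w₂|²)/(1+√(|w₁|⁴(1+|w₂|²)²+1))) differs from the pullback of the Eguchi–Hanson potential by the pluriharmonic function log |w₁|².) -/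
open scoped BigOperators

/-- In the first coordinate chart of the blow-up of `ℂ²` at the origin, the pullback of the
Eguchi–Hanson potential `Φ_EH(z) = √(‖z‖⁴+1) + log ‖z‖² − log(1 + √(‖z‖⁴+1))` differs from
`φ^{EH}_1(w) = √(|w₁|⁴(1+|w₂|²)²+1) + log((1+|w₂|²)/(1+√(|w₁|⁴(1+|w₂|²)²+1)))` by the
pluriharmonic function `log |w₁|²`. -/
theorem eguchiHanson_potential_chart (w₁ w₂ : ℂ) (hw₁ : w₁ ≠ 0)
    (z : EuclideanSpace ℂ (Fin 2)) (hz0 : z 0 = w₁) (hz1 : z 1 = w₁ * w₂) :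
    Real.sqrt (‖z‖ ^ 4 + 1) + Real.log (‖z‖ ^ 2)
        - Real.log (1 + Real.sqrt (‖z‖ ^ 4 + 1))
      = Real.sqrt (‖w₁‖ ^ 4 * (1 + ‖w₂‖ ^ 2) ^ 2 + 1)
        + Real.log ((1 + ‖w₂‖ ^ 2) /
            (1 + Real.sqrt (‖w₁‖ ^ 4 * (1 + ‖w₂‖ ^ 2) ^ 2 + 1)))
        + Real.log (‖w₁‖ ^ 2) := by
  have h1 : (0:ℝ) < ‖w₁‖ ^ 2 := by
    have := norm_pos_iff.mpr hw₁; positivity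
  have h2 : (0:ℝ) < 1 + ‖w₂‖ ^ 2 := by positivity
  have hsq : ‖z‖ ^ 2 = ‖w₁‖ ^ 2 * (1 + ‖w₂‖ ^ 2) := by
    have hnn : (0:ℝ) ≤ ∑ i, ‖z i‖ ^ 2 := Finset.sum_nonneg fun i _ => sq_nonneg _
    have : ‖z‖ ^ 2 = ∑ i, ‖z i‖ ^ 2 := by
      rw [EuclideanSpace.norm_eq, Real.sq_sqrt hnn]
    rw [this, Fin.sum_univ_two, hz0, hz1, norm_mul]
    ring
  have h4 : ‖z‖ ^ 4 = ‖w₁‖ ^ 4 * (1 + ‖w₂‖ ^ 2) ^ 2 := by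
    have : ‖z‖ ^ 4 = (‖z‖ ^ 2) ^ 2 := by ring
    rw [this, hsq]; ring
  have hs : (0:ℝ) < 1 + Real.sqrt (‖w₁‖ ^ 4 * (1 + ‖w₂‖ ^ 2) ^ 2 + 1) := by
    positivity
  rw [h4, hsq, Real.log_mul (ne_of_gt h1) (ne_of_gt h2),
    Real.log_div (ne_of_gt h2) (ne_of_gt hs)]
  ring
end

section
/- Let n ≥ 1, λ ∈ ℂ, and e ∈ ℂⁿ with ‖e‖ = 1, and define φ(u) = (u + λ) · e for u ∈ ℂ. Then for all z, w ∈ ℂ with z ≠ −λ and w ≠ −λ: ‖φ(z) − φ(w)‖² + log( ‖φ(z)‖² ‖φ(w)‖² / |φ(z)·φ(w)̄|² ) = |z − w|². (This says that the map Φ(z) = ((z+λ)e, [e]) of Theorem 1 pulls back the diastasis of the generalized Burns–Simanca metric g_S centered at φ(w) to the flat diastasis |z − w|², i.e. Φ : (ℂ, g₀) → (C̃ⁿ, g_S) is a holomorphic isometry of the flat complex line into the generalized Burns–Simanca manifold.) -/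
open scoped BigOperators

lemma herm_eq_inner {n : ℕ} (z w : EuclideanSpace ℂ (Fin n)) :
    herm z w = (inner ℂ w z : ℂ) := by
  simp [herm, PiLp.inner_apply, mul_comm]

/-- The map `φ(u) = (u + λ)·e` (`‖e‖ = 1`), i.e. `Φ(z) = ((z+λ)e, [e])`, pulls back the
diastasis of the generalized Burns–Simanca metric `g_S` centered at `φ(w)` to the flat
diastasis `|z − w|²`: it is a holomorphic isometry of `(ℂ, g₀)` into `(C̃ⁿ, g_S)`. -/
theorem line_isometry_burnsSimanca (n : ℕ) (hn : 1 ≤ n) (lam : ℂ)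
    (e : EuclideanSpace ℂ (Fin n)) (he : ‖e‖ = 1)
    (φ : ℂ → EuclideanSpace ℂ (Fin n)) (hφ : ∀ u, φ u = (u + lam) • e)
    (z w : ℂ) (hz : z ≠ -lam) (hw : w ≠ -lam) :
    ‖φ z - φ w‖ ^ 2
      + Real.log (‖φ z‖ ^ 2 * ‖φ w‖ ^ 2 / ‖herm (φ z) (φ w)‖ ^ 2)
      = ‖z - w‖ ^ 2 := by
  have hz' : z + lam ≠ 0 := fun h => hz (by linear_combination h)
  have hw' : w + lam ≠ 0 := fun h => hw (by linear_combination h)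
  have hee : (inner ℂ e e : ℂ) = 1 := by
    rw [inner_self_eq_norm_sq_to_K, he]; norm_num
  have hherm : herm (φ z) (φ w) = (z + lam) * (starRingEnd ℂ) (w + lam) := by
    rw [herm_eq_inner, hφ, hφ, inner_smul_left, inner_smul_right, hee]
    ring
  have habs : ‖herm (φ z) (φ w)‖ = ‖z + lam‖ * ‖w + lam‖ := by
    rw [hherm, norm_mul, Complex.norm_conj]
  have hnz : ‖φ z‖ = ‖z + lam‖ := by
    rw [hφ, norm_smul, he, mul_one]
  have hnw : ‖φ w‖ = ‖w + lam‖ := by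
    rw [hφ, norm_smul, he, mul_one]
  have hdiff : ‖φ z - φ w‖ = ‖z - w‖ := by
    rw [hφ, hφ, ← sub_smul]
    have : z + lam - (w + lam) = z - w := by ring
    rw [this, norm_smul, he, mul_one]
  have hlog : ‖φ z‖ ^ 2 * ‖φ w‖ ^ 2 / ‖herm (φ z) (φ w)‖ ^ 2 = 1 := by
    have h1 : ‖z + lam‖ ≠ 0 := by simpa using hz'
    have h2 : ‖w + lam‖ ≠ 0 := by simpa using hw'
    rw [hnz, hnw, habs, mul_pow]
    exact div_self (by positivity)
  rw [hlog, Real.log_one, add_zero, hdiff]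
end
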